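/- Let f : ℝ → ℝ be regulated, and let x be a Carathéodory solution of ẋ = f(x) on an interval. If x is differentiable at an interior point τ of its domain with ẋ(τ) > 0, then the right limit of f at x(τ) equals the derivative: f(x(τ)+) = ẋ(τ). -/

import Mathlib

open MeasureTheory Set Filter

/-- `f` is regulated with left limits `fl` and right limits `fr`. -/
def Regulated (f fl fr : ℝ → ℝ) : Prop :=
  ∀ y : ℝ,
    Filter.Tendsto f (nhdsWithin y (Set.Iio y)) (nhds (fl y)) ∧
    Filter.Tendsto f (nhdsWithin y (Set.Ioi y)) (nhds (fr y))

/-- The no-jamming condition: if `f(y−)·f(y+) = 0` or `f(y−) > 0 > f(y+)`, then `f(y) = 0`. -/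
def NoJamming (f fl fr : ℝ → ℝ) : Prop :=
  ∀ y : ℝ, (fl y * fr y = 0 ∨ (0 < fl y ∧ fr y < 0)) → f y = 0

/-- If a Carathéodory solution of `ẋ = f(x)` (with `f` regulated) is
differentiable at an interior time `τ` with `ẋ(τ) > 0`, then the right limit of
`f` at `x(τ)` equals the derivative: `f(x(τ)+) = ẋ(τ)`. -/
theorem right_limit_eq_deriv
    (f fl fr : ℝ → ℝ) (hreg : Regulated f fl fr)
    (a b : ℝ) (x : ℝ → ℝ)
    (hsol : ∀ t₁ ∈ Set.Icc a b, ∀ t₂ ∈ Set.Icc a b, t₁ ≤ t₂ →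
      x t₂ = x t₁ + ∫ s in t₁..t₂, f (x s))
    (τ : ℝ) (hτ : τ ∈ Set.Ioo a b)
    (d : ℝ) (hderiv : HasDerivAt x d τ) (hd : 0 < d) :
    fr (x τ) = d := by
  set L := fr (x τ) with hL
  have hslope : Tendsto (slope x τ) (nhdsWithin τ (Set.Ioi τ)) (nhds d) :=
    (hasDerivAt_iff_tendsto_slope.1 hderiv).mono_left
      (nhdsWithin_mono τ (fun s hs => ne_of_gt hs))
  have hpos : ∀ᶠ s in nhdsWithin τ (Set.Ioi τ), x τ < x s := by
    filter_upwards [hslope.eventually (eventually_gt_nhds hd), self_mem_nhdsWithin]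
      with s hs hs'
    have hst : (0:ℝ) < s - τ := sub_pos.2 hs'
    have h2 := mul_pos hs hst
    rw [slope_def_field, div_mul_cancel₀ _ (ne_of_gt hst)] at h2
    linarith
  have hxcont : Tendsto x (nhdsWithin τ (Set.Ioi τ)) (nhds (x τ)) :=
    (hderiv.continuousAt.tendsto).mono_left nhdsWithin_le_nhds
  have hxto : Tendsto x (nhdsWithin τ (Set.Ioi τ)) (nhdsWithin (x τ) (Set.Ioi (x τ))) :=
    tendsto_nhdsWithin_iff.2 ⟨hxcont, hpos⟩
  have hfx : Tendsto (fun s => f (x s)) (nhdsWithin τ (Set.Ioi τ)) (nhds L) :=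
    ((hreg (x τ)).2).comp hxto
  have key : ∀ ε > (0:ℝ), |L - d| ≤ 2 * ε := by
    intro ε hε
    set ε' := min ε (d / 2) with hε'
    have hε'pos : 0 < ε' := lt_min hε (by linarith)
    have h1 : ∀ᶠ s in nhdsWithin τ (Set.Ioi τ), |f (x s) - L| ≤ ε := by
      filter_upwards [hfx (Metric.closedBall_mem_nhds L hε)] with s hs
      simpa [Real.dist_eq] using hs
    obtain ⟨δ, hτδ, hδ⟩ := (nhdsGT_basis τ).eventually_iff.1 h1
    have h2 : ∀ᶠ t in nhdsWithin τ (Set.Ioi τ),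
        t ≤ b ∧ t < δ ∧ |slope x τ t - d| ≤ ε' := by
      have hb : ∀ᶠ t in nhdsWithin τ (Set.Ioi τ), t ≤ b := by
        filter_upwards [Ioo_mem_nhdsGT_of_mem ⟨le_refl τ, hτ.2⟩] with t ht using le_of_lt ht.2
      have hδ' : ∀ᶠ t in nhdsWithin τ (Set.Ioi τ), t < δ := by
        filter_upwards [Ioo_mem_nhdsGT_of_mem ⟨le_refl τ, hτδ⟩] with t ht using ht.2
      have hs : ∀ᶠ t in nhdsWithin τ (Set.Ioi τ), |slope x τ t - d| ≤ ε' := by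
        filter_upwards [hslope (Metric.closedBall_mem_nhds d hε'pos)] with t ht
        simpa [Real.dist_eq] using ht
      filter_upwards [hb, hδ', hs] with t u v w using ⟨u, v, w⟩
    obtain ⟨t, ⟨htb, htδ, hts⟩, ht⟩ := (h2.and self_mem_nhdsWithin).exists
    have hτt : τ < t := ht
    have htτ : (0:ℝ) < t - τ := sub_pos.2 hτt
    have hx : x t = x τ + ∫ s in τ..t, f (x s) :=
      hsol τ ⟨le_of_lt hτ.1, le_of_lt hτ.2⟩ t ⟨le_of_lt (lt_trans hτ.1 hτt), htb⟩ (le_of_lt hτt)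
    have hbound : ∀ s ∈ Set.Ioc τ t, |f (x s) - L| ≤ ε := fun s hs =>
      hδ ⟨hs.1, lt_of_le_of_lt hs.2 htδ⟩
    have hslope_val : slope x τ t = (x t - x τ) / (t - τ) := slope_def_field x τ t
    by_cases hint : IntervalIntegrable (fun s => f (x s)) volume τ t
    · -- bounds on the integral
      have hIoc : MeasurableSet (Set.Ioc τ t) := measurableSet_Ioc
      have hion : IntegrableOn (fun s => f (x s)) (Set.Ioc τ t) volume := hint.1
      have hconst : ∀ c : ℝ, IntegrableOn (fun _ => c) (Set.Ioc τ t) volume :=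
        fun c => integrableOn_const (by simp [Real.volume_Ioc])
      have hμ : (volume (Set.Ioc τ t)).toReal = t - τ := by
        rw [Real.volume_Ioc, ENNReal.toReal_ofReal (le_of_lt htτ)]
      have hup : ∫ s in τ..t, f (x s) ≤ (L + ε) * (t - τ) := by
        rw [intervalIntegral.integral_of_le (le_of_lt hτt)]
        calc ∫ s in Set.Ioc τ t, f (x s) ≤ ∫ _ in Set.Ioc τ t, (L + ε) :=
              setIntegral_mono_on hion (hconst _) hIoc (fun s hs => by
                have := abs_le.1 (hbound s hs); linarith [this.2])
          _ = (L + ε) * (t - τ) := by rw [setIntegral_const, measureReal_def, hμ, smul_eq_mul]; ring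
      have hlo : (L - ε) * (t - τ) ≤ ∫ s in τ..t, f (x s) := by
        rw [intervalIntegral.integral_of_le (le_of_lt hτt)]
        calc (L - ε) * (t - τ) = (volume (Set.Ioc τ t)).toReal • (L - ε) := by
              rw [hμ, smul_eq_mul]; ring
          _ = ∫ _ in Set.Ioc τ t, (L - ε) := (setIntegral_const _).symm
          _ ≤ ∫ s in Set.Ioc τ t, f (x s) :=
              setIntegral_mono_on (hconst _) hion hIoc (fun s hs => by
                have := abs_le.1 (hbound s hs); linarith [this.1])
      have hq : L - ε ≤ slope x τ t ∧ slope x τ t ≤ L + ε := by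
        rw [hslope_val]
        constructor
        · rw [le_div_iff₀ htτ]; linarith
        · rw [div_le_iff₀ htτ]; linarith
      have habs := abs_le.1 hts
      have : ε' ≤ ε := min_le_left _ _
      rw [abs_le]; constructor <;> nlinarith [hq.1, hq.2, habs.1, habs.2]
    · exfalso
      rw [intervalIntegral.integral_undef hint] at hx
      have : slope x τ t = 0 := by rw [hslope_val, hx]; simp
      have habs := abs_le.1 hts
      have h2 : ε' ≤ d / 2 := min_le_right _ _
      rw [this] at habs
      linarith [habs.1]
  by_contra hne
  have h0 : 0 < |L - d| := abs_pos.2 (sub_ne_zero.2 hne)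
  have := key (|L - d| / 4) (by linarith)
  linarith
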